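/- Let K > 0 and x > 0 be reals with exp(x²) ≥ K + 1, and define erf(x) := (2/√π)·∫₀^x e^{−t²} dt. Then (K/2)·(1 − erf(x))/erf(x) ≤ 1/2. In particular, for reals Y, θ, S, ε > 0, if x := √(ln(Y·θ·S/ε + 1)), then (Y·θ·S/2)·(1/erf(x))·(1 − erf(x)) ≤ ε/2. -/

import Mathlib

/-- The error function `erf(x) = (2/√π)·∫₀^x e^{-u²} du`. -/
noncomputable def erf (x : ℝ) : ℝ := (2 / Real.sqrt Real.pi) * ∫ u in (0:ℝ)..x, Real.exp (-u ^ 2)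

open MeasureTheory Set

lemma gauss_integrable : Integrable (fun t : ℝ => Real.exp (-t ^ 2)) := by
  simpa using integrable_exp_neg_mul_sq (one_pos : (0:ℝ) < 1)

lemma gauss_Ioi_zero : (∫ t in Ioi (0:ℝ), Real.exp (-t ^ 2)) = Real.sqrt Real.pi / 2 := by
  simpa using integral_gaussian_Ioi 1

lemma gauss_translate (x : ℝ) :
    (∫ t in Ioi x, Real.exp (-(t - x) ^ 2)) = ∫ s in Ioi (0:ℝ), Real.exp (-s ^ 2) := by
  have hmp : MeasurePreserving (fun s : ℝ => s + x) volume volume :=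
    measurePreserving_add_right volume x
  have h := hmp.setIntegral_image_emb (measurableEmbedding_addRight x)
      (fun t => Real.exp (-(t - x) ^ 2)) (Ioi (0:ℝ))
  have himg : (fun s : ℝ => s + x) '' Ioi (0:ℝ) = Ioi x := by
    ext t
    simp only [mem_image, mem_Ioi]
    constructor
    · rintro ⟨s, hs, rfl⟩; linarith
    · intro ht; exact ⟨t - x, by linarith, by ring⟩
  rw [himg] at h
  rw [h]
  congr 1 with s
  ring_nf

lemma gauss_tail_le {x : ℝ} (hx : 0 < x) :
    (∫ t in Ioi x, Real.exp (-t ^ 2)) ≤ Real.exp (-x ^ 2) * (Real.sqrt Real.pi / 2) := by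
  have h1 : (∫ t in Ioi x, Real.exp (-t ^ 2)) ≤
      ∫ t in Ioi x, Real.exp (-x ^ 2) * Real.exp (-(t - x) ^ 2) := by
    apply setIntegral_mono_on gauss_integrable.integrableOn
    · exact (((gauss_integrable.comp_sub_right x)).const_mul _).integrableOn
    · exact measurableSet_Ioi
    · intro t ht
      rw [← Real.exp_add]
      apply Real.exp_le_exp.2
      have : x ≤ t := le_of_lt ht
      nlinarith
  calc (∫ t in Ioi x, Real.exp (-t ^ 2)) ≤
      ∫ t in Ioi x, Real.exp (-x ^ 2) * Real.exp (-(t - x) ^ 2) := h1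
    _ = Real.exp (-x ^ 2) * ∫ t in Ioi x, Real.exp (-(t - x) ^ 2) := integral_const_mul _ _
    _ = Real.exp (-x ^ 2) * (Real.sqrt Real.pi / 2) := by
        rw [gauss_translate, gauss_Ioi_zero]

lemma erf_lower {x : ℝ} (hx : 0 < x) : 1 - Real.exp (-x ^ 2) ≤ erf x := by
  have hπ : 0 < Real.sqrt Real.pi := Real.sqrt_pos.2 Real.pi_pos
  have hsplit : (∫ t in Ioi (0:ℝ), Real.exp (-t ^ 2)) =
      (∫ t in Ioc (0:ℝ) x, Real.exp (-t ^ 2)) + ∫ t in Ioi x, Real.exp (-t ^ 2) := by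
    rw [← Ioc_union_Ioi_eq_Ioi hx.le]
    exact setIntegral_union Set.Ioc_disjoint_Ioi_same measurableSet_Ioi
      gauss_integrable.integrableOn gauss_integrable.integrableOn
  have hinterval : (∫ u in (0:ℝ)..x, Real.exp (-u ^ 2)) =
      ∫ t in Ioc (0:ℝ) x, Real.exp (-t ^ 2) := intervalIntegral.integral_of_le hx.le
  have htail := gauss_tail_le hx
  have hval : (∫ u in (0:ℝ)..x, Real.exp (-u ^ 2)) ≥
      Real.sqrt Real.pi / 2 - Real.exp (-x ^ 2) * (Real.sqrt Real.pi / 2) := by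
    rw [hinterval]
    have := gauss_Ioi_zero
    linarith [hsplit ▸ this]
  have : erf x ≥ (2 / Real.sqrt Real.pi) *
      (Real.sqrt Real.pi / 2 - Real.exp (-x ^ 2) * (Real.sqrt Real.pi / 2)) := by
    unfold erf
    apply mul_le_mul_of_nonneg_left hval (by positivity)
  calc 1 - Real.exp (-x ^ 2)
      = (2 / Real.sqrt Real.pi) *
        (Real.sqrt Real.pi / 2 - Real.exp (-x ^ 2) * (Real.sqrt Real.pi / 2)) := by
        field_simp
    _ ≤ erf x := this

lemma key_ineq {K x : ℝ} (hK : 0 < K) (hx : 0 < x) (h : K + 1 ≤ Real.exp (x ^ 2)) :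
    K / 2 * (1 - erf x) / erf x ≤ 1 / 2 := by
  set E := Real.exp (-x ^ 2) with hE
  have hE1 : Real.exp (x ^ 2) * E = 1 := by
    rw [hE, ← Real.exp_add]; simp
  have hEpos : 0 < E := Real.exp_pos _
  have hlow : 1 - E ≤ erf x := erf_lower hx
  have hElt : E < 1 := by
    rw [hE]
    apply Real.exp_lt_one_iff.2
    nlinarith
  have herfpos : 0 < erf x := lt_of_lt_of_le (by linarith) hlow
  rw [div_le_div_iff₀ herfpos two_pos]
  have hKE : K * E ≤ 1 - E := by nlinarith
  nlinarith

/-- If `e^{x²} ≥ K + 1` then `(K/2)·(1 − erf x)/erf x ≤ 1/2`; in particular,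
for `Y, θ, S, ε > 0` and `x = √(ln(YθS/ε + 1))`, the area error
`E_Area = (YθS/2)·(1/erf x)·(1 − erf x)` is at most `ε/2`. -/
theorem area_error_small :
    (∀ K x : ℝ, 0 < K → 0 < x → K + 1 ≤ Real.exp (x ^ 2) →
      K / 2 * (1 - erf x) / erf x ≤ 1 / 2) ∧
    (∀ Y θ S ε : ℝ, 0 < Y → 0 < θ → 0 < S → 0 < ε →
      Y * θ * S / 2 * (1 / erf (Real.sqrt (Real.log (Y * θ * S / ε + 1)))) *
          (1 - erf (Real.sqrt (Real.log (Y * θ * S / ε + 1)))) ≤ ε / 2) := by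
  constructor
  · intro K x hK hx h
    exact key_ineq hK hx h
  · intro Y θ S ε hY hθ hS hε
    set K := Y * θ * S / ε with hKdef
    have hK : 0 < K := by positivity
    set x := Real.sqrt (Real.log (K + 1)) with hxdef
    have hlogpos : 0 < Real.log (K + 1) := Real.log_pos (by linarith)
    have hx : 0 < x := Real.sqrt_pos.2 hlogpos
    have hx2 : x ^ 2 = Real.log (K + 1) := Real.sq_sqrt hlogpos.le
    have hexp : K + 1 ≤ Real.exp (x ^ 2) := by
      rw [hx2, Real.exp_log (by linarith)]
    have h := key_ineq hK hx hexp
    have hεK : ε * K = Y * θ * S := by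
      rw [hKdef]; field_simp
    have key : Y * θ * S / 2 * (1 / erf x) * (1 - erf x)
        = ε * (K / 2 * (1 - erf x) / erf x) := by
      rw [← hεK]; ring
    calc Y * θ * S / 2 * (1 / erf x) * (1 - erf x)
        = ε * (K / 2 * (1 - erf x) / erf x) := key
      _ ≤ ε * (1 / 2) := mul_le_mul_of_nonneg_left h hε.le
      _ = ε / 2 := by ring
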